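/- Let m, p ≥ 1, let F : [−π, π] → ℂ^{p×m} and G, L : [−π, π] → ℂ^{m×m} be measurable matrix-valued functions with L(ω)·G(ω) = I_m for almost every ω, and let K = diag(k₁, …, k_m) with all k_i > 0. Assume the functions ω ↦ Tr((G(ω)K)ᴴ (G(ω)K)), ω ↦ Tr((F(ω)L(ω))ᴴ (F(ω)L(ω))), and ω ↦ ‖F(ω)K‖_* are integrable. Then ((1/2π) ∫_{−π}^{π} Tr((G(ω)K)ᴴ G(ω)K) dω) · ((1/2π) ∫_{−π}^{π} Tr((F(ω)L(ω))ᴴ F(ω)L(ω)) dω) ≥ ((1/2π) ∫_{−π}^{π} ‖F(ω)K‖_* dω)², where all traces are (real) nonnegative. (Lower bound on the achievable mean squared error of any zero-forcing-equalization mechanism with a general, not necessarily diagonal, pre-filter.) -/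

import Mathlib

open MeasureTheory Real Matrix
open scoped ComplexOrder ENNReal

instance (l n : Type*) (α : Type*) [MeasurableSpace α] :
    MeasurableSpace (Matrix l n α) := MeasurableSpace.pi

/-- Nuclear norm of a complex matrix: the trace of the unique positive-semidefinite
square root of `Mᴴ M` (equivalently, the sum of the singular values of `M`). -/
noncomputable def nuclearNorm {p m : ℕ} (M : Matrix (Fin p) (Fin m) ℂ) : ℝ :=
  (((Matrix.posSemidef_conjTranspose_mul_self M).1.eigenvectorUnitary.1 *
      Matrix.diagonal ((fun x : ℝ => (x : ℂ)) ∘ (√·) ∘ (Matrix.posSemidef_conjTranspose_mul_self M).1.eigenvalues) *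
      (star (Matrix.posSemidef_conjTranspose_mul_self M).1.eigenvectorUnitary :
        Matrix (Fin m) (Fin m) ℂ)).trace).re

namespace ZFEAux

lemma star_mul_self_re (z : ℂ) : (star z * z).re = ‖z‖ ^ 2 := by
  rw [mul_comm, show star z = starRingEnd ℂ z from rfl, Complex.mul_conj]
  simp [Complex.normSq_eq_norm_sq, ← Complex.ofReal_pow]

/-- Cauchy–Schwarz with square roots. -/
lemma sqrt_cs {ι : Type*} (s : Finset ι) (f g : ι → ℝ) (hf : ∀ i ∈ s, 0 ≤ f i)
    (hg : ∀ i ∈ s, 0 ≤ g i) :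
    ∑ i ∈ s, f i * g i ≤ Real.sqrt (∑ i ∈ s, f i ^ 2) * Real.sqrt (∑ i ∈ s, g i ^ 2) := by
  have h0 : 0 ≤ ∑ i ∈ s, f i * g i :=
    Finset.sum_nonneg fun i hi => mul_nonneg (hf i hi) (hg i hi)
  have h2 := Finset.sum_mul_sq_le_sq_mul_sq s f g
  calc ∑ i ∈ s, f i * g i = Real.sqrt ((∑ i ∈ s, f i * g i) ^ 2) := (Real.sqrt_sq h0).symm
    _ ≤ Real.sqrt ((∑ i ∈ s, f i ^ 2) * ∑ i ∈ s, g i ^ 2) := Real.sqrt_le_sqrt h2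
    _ = _ := Real.sqrt_mul (Finset.sum_nonneg fun i _ => sq_nonneg _) _

lemma re_dot_self {n : ℕ} (a : Fin n → ℂ) :
    (star a ⬝ᵥ a).re = ∑ i, ‖a i‖ ^ 2 := by
  simp only [dotProduct, Pi.star_apply, Complex.re_sum]
  exact Finset.sum_congr rfl fun i _ => star_mul_self_re (a i)

lemma re_dot_self_nonneg {n : ℕ} (a : Fin n → ℂ) : 0 ≤ (star a ⬝ᵥ a).re := by
  rw [re_dot_self]; exact Finset.sum_nonneg fun i _ => sq_nonneg _

/-- Cauchy–Schwarz for the complex dot product, real-part form. -/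
lemma cs_dot {n : ℕ} (a b : Fin n → ℂ) :
    (star a ⬝ᵥ b).re ≤ Real.sqrt ((star a ⬝ᵥ a).re) * Real.sqrt ((star b ⬝ᵥ b).re) := by
  have h1 : (star a ⬝ᵥ b).re ≤ ∑ i, ‖a i‖ * ‖b i‖ := by
    rw [dotProduct, Complex.re_sum]
    refine Finset.sum_le_sum fun i _ => ?_
    calc (star a i * b i).re ≤ ‖star a i * b i‖ := Complex.re_le_norm _
      _ = ‖a i‖ * ‖b i‖ := by
        simp only [Pi.star_apply, show star (a i) = starRingEnd ℂ (a i) from rfl]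
        rw [norm_mul]
        simp
  rw [re_dot_self, re_dot_self]
  exact h1.trans (sqrt_cs Finset.univ _ _ (fun i _ => norm_nonneg _)
    (fun i _ => norm_nonneg _))

lemma re_trace_eq_sum {a b : ℕ} (C : Matrix (Fin a) (Fin b) ℂ) :
    ((Cᴴ * C).trace).re = ∑ j, ∑ i, ‖C i j‖ ^ 2 := by
  simp only [Matrix.trace, Matrix.diag, Matrix.mul_apply, Matrix.conjTranspose_apply,
    Complex.re_sum]
  exact Finset.sum_congr rfl fun j _ => Finset.sum_congr rfl fun i _ =>
    star_mul_self_re (C i j)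

lemma re_trace_nonneg {a b : ℕ} (C : Matrix (Fin a) (Fin b) ℂ) :
    0 ≤ ((Cᴴ * C).trace).re := by
  rw [re_trace_eq_sum]
  exact Finset.sum_nonneg fun j _ => Finset.sum_nonneg fun i _ => sq_nonneg _

-- Key matrix inequality: nuclear norm of a product ≤ product of Frobenius norms.
set_option maxHeartbeats 1000000 in
lemma nuclear_mul_le {p m : ℕ} (A : Matrix (Fin p) (Fin m) ℂ) (B : Matrix (Fin m) (Fin m) ℂ) :
    nuclearNorm (A * B) ≤
      Real.sqrt (((Aᴴ * A).trace).re) * Real.sqrt (((Bᴴ * B).trace).re) := by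
  classical
  have h : ((A * B)ᴴ * (A * B)).PosSemidef := Matrix.posSemidef_conjTranspose_mul_self (A * B)
  set hH : ((A * B)ᴴ * (A * B)).IsHermitian := h.1 with hHdef
  set d : Fin m → ℝ := hH.eigenvalues with hd_def
  have hd : ∀ i, 0 ≤ d i := h.eigenvalues_nonneg
  set W : Matrix (Fin m) (Fin m) ℂ := (hH.eigenvectorUnitary : Matrix (Fin m) (Fin m) ℂ)
    with hWdef
  have hW1 : W * star W = 1 := Matrix.mem_unitaryGroup_iff.mp hH.eigenvectorUnitary.2
  have hW1' : star W * W = 1 := Matrix.mem_unitaryGroup_iff'.mp hH.eigenvectorUnitary.2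
  have hsq : ∀ i, (Real.sqrt (d i) : ℂ) * (Real.sqrt (d i) : ℂ) = (d i : ℂ) := by
    intro i; rw [← Complex.ofReal_mul, Real.mul_self_sqrt (hd i)]
  have hs0 : ∀ i, d i ≠ 0 → (Real.sqrt (d i) : ℂ) ≠ 0 := by
    intro i hi
    simp only [Complex.ofReal_ne_zero]
    exact Real.sqrt_ne_zero'.mpr (lt_of_le_of_ne (hd i) (Ne.symm hi))
  -- Step 1 : nuclearNorm (A*B) = ∑ √(d i)
  have step1 : nuclearNorm (A * B) = ∑ i, Real.sqrt (d i) := by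
    have e : ((Matrix.posSemidef_conjTranspose_mul_self (A * B)).1.eigenvectorUnitary.1 *
        Matrix.diagonal ((fun x : ℝ => (x : ℂ)) ∘ (√·) ∘
          (Matrix.posSemidef_conjTranspose_mul_self (A * B)).1.eigenvalues) *
        (star (Matrix.posSemidef_conjTranspose_mul_self (A * B)).1.eigenvectorUnitary :
          Matrix (Fin m) (Fin m) ℂ)) =
        W * Matrix.diagonal ((↑) ∘ Real.sqrt ∘ d) * star W := rfl
    rw [nuclearNorm, e, Matrix.trace_mul_cycle, hW1', Matrix.one_mul,
      Matrix.trace_diagonal, Complex.re_sum]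
    simp
  -- eigenvectors: columns of W
  set w : Fin m → Fin m → ℂ := fun i r => W r i with hw_def
  have hkey : ∀ j, ((A * B)ᴴ * (A * B)) *ᵥ w j = (d j : ℂ) • w j := by
    intro j
    have hmul : ((A * B)ᴴ * (A * B)) * W = W * Matrix.diagonal ((↑) ∘ d) := by
      conv_lhs => rw [hH.spectral_theorem, Unitary.conjStarAlgAut_apply]
      rw [Matrix.mul_assoc, hW1', Matrix.mul_one]
      rfl
    funext r
    have h2 : (((A * B)ᴴ * (A * B)) *ᵥ w j) r = (((A * B)ᴴ * (A * B)) * W) r j := rfl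
    rw [h2, hmul, Matrix.mul_diagonal]
    show W r j * (d j : ℂ) = (d j : ℂ) * W r j
    rw [mul_comm]
  have hww : ∀ i j, star (w i) ⬝ᵥ w j = if i = j then 1 else 0 := by
    intro i j
    have e : star (w i) ⬝ᵥ w j = (star W * W) i j := by
      rw [Matrix.star_eq_conjTranspose, Matrix.mul_apply]
      refine Finset.sum_congr rfl fun r _ => ?_
      rw [Matrix.conjTranspose_apply]
      rfl
    rw [e, hW1', Matrix.one_apply]
  set v : Fin m → Fin p → ℂ := fun i => (A * B) *ᵥ w i with hv_def
  have hvv : ∀ i j, star (v i) ⬝ᵥ v j = if i = j then (d i : ℂ) else 0 := by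
    intro i j
    have e1 : star (v i) ⬝ᵥ v j = star (w i) ⬝ᵥ (((A * B)ᴴ * (A * B)) *ᵥ w j) := by
      show star ((A * B) *ᵥ w i) ⬝ᵥ ((A * B) *ᵥ w j) = _
      rw [Matrix.star_mulVec, ← Matrix.dotProduct_mulVec, Matrix.mulVec_mulVec]
    rw [e1, hkey j, dotProduct_smul, hww i j]
    by_cases hij : i = j <;> simp [hij, smul_eq_mul]
  set u : Fin m → Fin p → ℂ := fun i =>
    if d i = 0 then 0 else ((Real.sqrt (d i) : ℂ)⁻¹) • v i with hu_def
  have hu0 : ∀ i, d i = 0 → u i = 0 := by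
    intro i hi
    show (if d i = 0 then 0 else ((Real.sqrt (d i) : ℂ)⁻¹) • v i) = 0
    rw [if_pos hi]
  have hu1 : ∀ i, d i ≠ 0 → u i = ((Real.sqrt (d i) : ℂ)⁻¹) • v i := by
    intro i hi
    show (if d i = 0 then 0 else ((Real.sqrt (d i) : ℂ)⁻¹) • v i) = _
    rw [if_neg hi]
  set a : Fin m → Fin m → ℂ := fun i => Aᴴ *ᵥ u i with ha_def
  set b : Fin m → Fin m → ℂ := fun i => B *ᵥ w i with hb_def
  -- √(d i) = re (star (a i) ⬝ᵥ b i)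
  have hab : ∀ i, Real.sqrt (d i) = (star (a i) ⬝ᵥ b i).re := by
    intro i
    have e1 : star (a i) ⬝ᵥ b i = star (u i) ⬝ᵥ v i := by
      show star (Aᴴ *ᵥ u i) ⬝ᵥ (B *ᵥ w i) = _
      rw [Matrix.star_mulVec, Matrix.conjTranspose_conjTranspose,
        ← Matrix.dotProduct_mulVec, Matrix.mulVec_mulVec]
    rw [e1]
    by_cases hi : d i = 0
    · rw [hu0 i hi, hi, Real.sqrt_zero]
      simp
    · rw [hu1 i hi, star_smul, smul_dotProduct, hvv i i, if_pos rfl]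
      rw [smul_eq_mul, star_inv₀, show star ((Real.sqrt (d i) : ℂ)) = (Real.sqrt (d i) : ℂ) by
        rw [show (star ((Real.sqrt (d i)) : ℂ)) = (starRingEnd ℂ) _ from rfl, Complex.conj_ofReal]]
      rw [← hsq i, inv_mul_cancel_left₀ (hs0 i hi)]
      simp
  set α : Fin m → ℝ := fun i => (star (a i) ⬝ᵥ a i).re with hα_def
  set β : Fin m → ℝ := fun i => (star (b i) ⬝ᵥ b i).re with hβ_def
  have hsum1 : ∑ i, Real.sqrt (d i) ≤
      Real.sqrt (∑ i, α i) * Real.sqrt (∑ i, β i) := by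
    have h1 : ∑ i, Real.sqrt (d i) ≤ ∑ i, Real.sqrt (α i) * Real.sqrt (β i) := by
      refine Finset.sum_le_sum fun i _ => ?_
      rw [hab i]; exact cs_dot (a i) (b i)
    refine h1.trans ?_
    have := sqrt_cs Finset.univ (fun i => Real.sqrt (α i)) (fun i => Real.sqrt (β i))
      (fun i _ => Real.sqrt_nonneg _) (fun i _ => Real.sqrt_nonneg _)
    simpa [fun i => (Real.sq_sqrt (re_dot_self_nonneg (a i)) : √(α i) ^ 2 = α i),
      fun i => (Real.sq_sqrt (re_dot_self_nonneg (b i)) : √(β i) ^ 2 = β i)] using this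
  -- ∑ β = Re Tr (Bᴴ B)
  have hβsum : ∑ i, β i = ((Bᴴ * B).trace).re := by
    have e1 : ∑ i, β i = (((B * W)ᴴ * (B * W)).trace).re := by
      rw [re_trace_eq_sum]
      refine Finset.sum_congr rfl fun i _ => ?_
      show (star (b i) ⬝ᵥ b i).re = _
      rw [re_dot_self]
      exact Finset.sum_congr rfl fun r _ => rfl
    rw [e1]
    have e2 : (B * W)ᴴ * (B * W) = Wᴴ * (Bᴴ * B) * W := by
      rw [Matrix.conjTranspose_mul, Matrix.mul_assoc, ← Matrix.mul_assoc Bᴴ B W,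
        ← Matrix.mul_assoc]
    rw [e2, Matrix.trace_mul_cycle, ← Matrix.mul_assoc, ← Matrix.star_eq_conjTranspose, hW1,
      Matrix.one_mul]
  -- ∑ α ≤ Re Tr (Aᴴ A)
  set U : Matrix (Fin p) (Fin m) ℂ := Matrix.of (fun r i => u i r) with hU_def
  have hαsum : ∑ i, α i ≤ ((Aᴴ * A).trace).re := by
    have e1 : ∑ i, α i = (((Aᴴ * U)ᴴ * (Aᴴ * U)).trace).re := by
      rw [re_trace_eq_sum]
      refine Finset.sum_congr rfl fun i _ => ?_
      show (star (a i) ⬝ᵥ a i).re = _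
      rw [re_dot_self]
      exact Finset.sum_congr rfl fun r _ => rfl
    -- UᴴU = diagonal e
    have huu : ∀ i j, star (u i) ⬝ᵥ u j =
        if i = j then (if d i = 0 then 0 else 1) else 0 := by
      intro i j
      by_cases hi : d i = 0
      · by_cases hij : i = j
        · subst hij
          rw [hu0 i hi]
          simp [hi]
        · rw [hu0 i hi]
          simp [hij]
      by_cases hj : d j = 0
      · rw [hu0 j hj]
        have hij : i ≠ j := fun hij => hi (hij ▸ hj)
        simp [hij]
      rw [hu1 i hi, hu1 j hj, star_smul, smul_dotProduct, dotProduct_smul,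
        hvv i j]
      by_cases hij : i = j
      · subst hij
        rw [if_pos rfl, if_pos rfl, if_neg hi]
        rw [smul_eq_mul, smul_eq_mul, star_inv₀,
          show star ((Real.sqrt (d i) : ℂ)) = (Real.sqrt (d i) : ℂ) by
            rw [show (star ((Real.sqrt (d i)) : ℂ)) = (starRingEnd ℂ) _ from rfl,
              Complex.conj_ofReal]]
        rw [← hsq i, inv_mul_cancel_left₀ (hs0 i hi), inv_mul_cancel₀ (hs0 i hi)]
      · simp [hij]
    have hUU : Uᴴ * U = Matrix.diagonal (fun i => if d i = 0 then (0 : ℂ) else 1) := by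
      ext i j
      rw [Matrix.mul_apply, Matrix.diagonal_apply]
      have e : ∑ r, Uᴴ i r * U r j = star (u i) ⬝ᵥ u j := by
        refine Finset.sum_congr rfl fun r _ => ?_
        rw [Matrix.conjTranspose_apply]
        rfl
      rw [e, huu i j]
    have hUe : U * (Uᴴ * U) = U := by
      rw [hUU]
      ext r i
      rw [Matrix.mul_diagonal]
      by_cases hi : d i = 0
      · rw [if_pos hi, mul_zero]
        have : U r i = u i r := rfl
        rw [this, hu0 i hi]
        rfl
      · rw [if_neg hi, mul_one]
    set P : Matrix (Fin p) (Fin p) ℂ := U * Uᴴ with hP_def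
    have hPH : Pᴴ = P := by rw [hP_def, Matrix.conjTranspose_mul,
      Matrix.conjTranspose_conjTranspose]
    have hPP : P * P = P := by
      rw [hP_def]
      calc U * Uᴴ * (U * Uᴴ) = U * (Uᴴ * U) * Uᴴ := by
            rw [Matrix.mul_assoc U Uᴴ (U * Uᴴ), ← Matrix.mul_assoc Uᴴ U Uᴴ,
              ← Matrix.mul_assoc U (Uᴴ * U) Uᴴ]
        _ = U * Uᴴ := by rw [hUe]
    have e2 : (((Aᴴ * U)ᴴ * (Aᴴ * U)).trace).re = ((P * (A * Aᴴ)).trace).re := by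
      have e : (Aᴴ * U)ᴴ * (Aᴴ * U) = Uᴴ * (A * Aᴴ) * U := by
        rw [Matrix.conjTranspose_mul, Matrix.conjTranspose_conjTranspose,
          Matrix.mul_assoc (Uᴴ) A (Aᴴ * U), ← Matrix.mul_assoc A Aᴴ U, ← Matrix.mul_assoc]
      rw [e, Matrix.trace_mul_cycle]
    have e3 : ((P * (A * Aᴴ)).trace).re ≤ ((A * Aᴴ).trace).re := by
      have hq : (1 - P)ᴴ * (1 - P) = 1 - P := by
        rw [Matrix.conjTranspose_sub, hPH, Matrix.conjTranspose_one]
        calc (1 - P) * (1 - P) = 1 - P - P + P * P := by noncomm_ring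
          _ = 1 - P := by rw [hPP]; abel
      have h0 : 0 ≤ ((((1 - P) * A)ᴴ * ((1 - P) * A)).trace).re := re_trace_nonneg _
      have e4 : ((1 - P) * A)ᴴ * ((1 - P) * A) = Aᴴ * ((1 - P) * A) := by
        calc ((1 - P) * A)ᴴ * ((1 - P) * A) = Aᴴ * ((1 - P)ᴴ * (1 - P)) * A := by
              rw [Matrix.conjTranspose_mul, Matrix.mul_assoc (Aᴴ) ((1-P)ᴴ) ((1-P) * A),
                ← Matrix.mul_assoc ((1-P)ᴴ) (1-P) A, ← Matrix.mul_assoc]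
          _ = Aᴴ * ((1 - P) * A) := by rw [hq, Matrix.mul_assoc]
      have e5 : (Aᴴ * ((1 - P) * A)).trace = ((1 - P) * (A * Aᴴ)).trace := by
        rw [← Matrix.mul_assoc, Matrix.trace_mul_cycle, Matrix.trace_mul_comm]
      have e6 : ((1 - P) * (A * Aᴴ)).trace = (A * Aᴴ).trace - (P * (A * Aᴴ)).trace := by
        rw [Matrix.sub_mul, Matrix.one_mul, Matrix.trace_sub]
      rw [e4, e5, e6] at h0
      have h7 := Complex.sub_re ((A * Aᴴ).trace) ((P * (A * Aᴴ)).trace)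
      rw [h7] at h0
      linarith
    have e7 : ((A * Aᴴ).trace).re = ((Aᴴ * A).trace).re := by
      rw [Matrix.trace_mul_comm]
    rw [e1, e2, ← e7]
    exact e3
  -- combine
  rw [step1]
  refine hsum1.trans ?_
  exact mul_le_mul (Real.sqrt_le_sqrt hαsum) (by rw [hβsum]) (Real.sqrt_nonneg _)
    (Real.sqrt_nonneg _)

lemma nuclearNorm_nonneg {p m : ℕ} (M : Matrix (Fin p) (Fin m) ℂ) : 0 ≤ nuclearNorm M := by
  classical
  have h : (Mᴴ * M).PosSemidef := Matrix.posSemidef_conjTranspose_mul_self M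
  have hW1' : star (h.1.eigenvectorUnitary : Matrix (Fin m) (Fin m) ℂ) *
      (h.1.eigenvectorUnitary : Matrix (Fin m) (Fin m) ℂ) = 1 :=
    Matrix.mem_unitaryGroup_iff'.mp h.1.eigenvectorUnitary.2
  have e : ((Matrix.posSemidef_conjTranspose_mul_self M).1.eigenvectorUnitary.1 *
      Matrix.diagonal ((fun x : ℝ => (x : ℂ)) ∘ (√·) ∘
        (Matrix.posSemidef_conjTranspose_mul_self M).1.eigenvalues) *
      (star (Matrix.posSemidef_conjTranspose_mul_self M).1.eigenvectorUnitary :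
        Matrix (Fin m) (Fin m) ℂ)) =
      (h.1.eigenvectorUnitary : Matrix (Fin m) (Fin m) ℂ) *
        Matrix.diagonal ((↑) ∘ Real.sqrt ∘ h.1.eigenvalues) *
        star (h.1.eigenvectorUnitary : Matrix (Fin m) (Fin m) ℂ) := rfl
  rw [nuclearNorm, e, Matrix.trace_mul_cycle, hW1', Matrix.one_mul,
    Matrix.trace_diagonal, Complex.re_sum]
  refine Finset.sum_nonneg fun i _ => ?_
  simp [Real.sqrt_nonneg]

lemma measurable_entry {a b : ℕ} {F : ℝ → Matrix (Fin a) (Fin b) ℂ} (hF : Measurable F)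
    (i : Fin a) (j : Fin b) : Measurable fun ω => F ω i j :=
  (measurable_pi_apply j).comp ((measurable_pi_apply i).comp hF)

lemma measurable_tr {a b : ℕ} {M : ℝ → Matrix (Fin a) (Fin b) ℂ}
    (hM : ∀ i j, Measurable fun ω => M ω i j) :
    Measurable fun ω => (((M ω)ᴴ * (M ω)).trace).re := by
  have e : (fun ω => (((M ω)ᴴ * (M ω)).trace).re)
      = fun ω => ∑ j, ∑ i, ‖M ω i j‖ ^ 2 := by
    funext ω; exact re_trace_eq_sum (M ω)
  rw [e]
  refine Finset.measurable_sum _ fun j _ => Finset.measurable_sum _ fun i _ => ?_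
  exact (continuous_norm.measurable.comp (hM i j)).pow_const 2

end ZFEAux

open ZFEAux

theorem zfe_general_prefilter_lower_bound (m p : ℕ) (hm : 1 ≤ m) (hp : 1 ≤ p)
    (F : ℝ → Matrix (Fin p) (Fin m) ℂ) (G L : ℝ → Matrix (Fin m) (Fin m) ℂ)
    (hF : Measurable F) (hG : Measurable G) (hL : Measurable L)
    (hinv : ∀ᵐ ω ∂(volume.restrict (Set.Icc (-π) π)), L ω * G ω = 1)
    (k : Fin m → ℝ) (hk : ∀ i, 0 < k i)
    (K : Matrix (Fin m) (Fin m) ℂ) (hK : K = Matrix.diagonal fun i => (k i : ℂ))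
    (hGK : IntegrableOn (fun ω => (((G ω * K)ᴴ * (G ω * K)).trace).re) (Set.Icc (-π) π))
    (hFL : IntegrableOn (fun ω => (((F ω * L ω)ᴴ * (F ω * L ω)).trace).re) (Set.Icc (-π) π))
    (hFK : IntegrableOn (fun ω => nuclearNorm (F ω * K)) (Set.Icc (-π) π)) :
    ((1 / (2 * π)) * ∫ ω in Set.Icc (-π) π, (((G ω * K)ᴴ * (G ω * K)).trace).re) *
        ((1 / (2 * π)) * ∫ ω in Set.Icc (-π) π, (((F ω * L ω)ᴴ * (F ω * L ω)).trace).re) ≥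
      ((1 / (2 * π)) * ∫ ω in Set.Icc (-π) π, nuclearNorm (F ω * K)) ^ 2 := by
  have hπ : (0:ℝ) < π := Real.pi_pos
  set S : Set ℝ := Set.Icc (-π) π with hS
  set f : ℝ → ℝ := fun ω => Real.sqrt ((((G ω * K)ᴴ * (G ω * K)).trace).re) with hf_def
  set g : ℝ → ℝ := fun ω => Real.sqrt ((((F ω * L ω)ᴴ * (F ω * L ω)).trace).re) with hg_def
  -- measurability
  have hGKe : ∀ i j, Measurable fun ω => (G ω * K) i j := by
    intro i j
    have e : (fun ω => (G ω * K) i j) = fun ω => ∑ l, G ω i l * K l j := by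
      funext ω; exact Matrix.mul_apply
    rw [e]
    exact Finset.measurable_sum _ fun l _ => (measurable_entry hG i l).mul measurable_const
  have hFLe : ∀ i j, Measurable fun ω => (F ω * L ω) i j := by
    intro i j
    have e : (fun ω => (F ω * L ω) i j) = fun ω => ∑ l, F ω i l * L ω l j := by
      funext ω; exact Matrix.mul_apply
    rw [e]
    exact Finset.measurable_sum _ fun l _ =>
      (measurable_entry hF i l).mul (measurable_entry hL l j)
  have hfm : Measurable f := Real.continuous_sqrt.measurable.comp (measurable_tr hGKe)
  have hgm : Measurable g := Real.continuous_sqrt.measurable.comp (measurable_tr hFLe)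
  have hfsq : ∀ ω, f ω ^ 2 = (((G ω * K)ᴴ * (G ω * K)).trace).re := fun ω =>
    Real.sq_sqrt (re_trace_nonneg _)
  have hgsq : ∀ ω, g ω ^ 2 = (((F ω * L ω)ᴴ * (F ω * L ω)).trace).re := fun ω =>
    Real.sq_sqrt (re_trace_nonneg _)
  have hf2 : MemLp f 2 (volume.restrict S) := by
    refine (memLp_two_iff_integrable_sq hfm.aestronglyMeasurable).mpr ?_
    have : (fun ω => f ω ^ 2) = fun ω => (((G ω * K)ᴴ * (G ω * K)).trace).re := funext hfsq
    rw [this]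
    exact hGK
  have hg2 : MemLp g 2 (volume.restrict S) := by
    refine (memLp_two_iff_integrable_sq hgm.aestronglyMeasurable).mpr ?_
    have : (fun ω => g ω ^ 2) = fun ω => (((F ω * L ω)ᴴ * (F ω * L ω)).trace).re := funext hgsq
    rw [this]
    exact hFL
  have hmul_int : Integrable (fun ω => g ω * f ω) (volume.restrict S) := by
    have h1 : (1 : ℝ≥0∞) / 1 = 1 / 2 + 1 / 2 := by
      rw [ENNReal.add_halves]; exact one_div_one
    have := hf2.smul hg2 (r := 1) (hpqr := ⟨by rw [inv_one, ← one_div, ENNReal.add_halves]⟩)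
    rw [memLp_one_iff_integrable] at this
    exact this
  have hae : ∀ᵐ ω ∂(volume.restrict S), nuclearNorm (F ω * K) ≤ g ω * f ω := by
    filter_upwards [hinv] with ω hω
    have hFKe : F ω * K = (F ω * L ω) * (G ω * K) := by
      rw [Matrix.mul_assoc, ← Matrix.mul_assoc (L ω) (G ω) K, hω, Matrix.one_mul]
    rw [hFKe]
    exact nuclear_mul_le _ _
  have hN : (∫ ω in S, nuclearNorm (F ω * K)) ≤ ∫ ω in S, g ω * f ω :=
    integral_mono_ae hFK hmul_int hae
  have hH : (∫ ω in S, g ω * f ω) ≤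
      Real.sqrt (∫ ω in S, g ω ^ 2) * Real.sqrt (∫ ω in S, f ω ^ 2) := by
    have hpq : Real.HolderConjugate 2 2 := Real.HolderConjugate.two_two
    have h2 : (ENNReal.ofReal (2:ℝ)) = 2 := by norm_num
    have := integral_mul_le_Lp_mul_Lq_of_nonneg (μ := volume.restrict S) hpq
      (Filter.Eventually.of_forall fun ω => Real.sqrt_nonneg _)
      (Filter.Eventually.of_forall fun ω => Real.sqrt_nonneg _)
      (h2 ▸ hg2) (h2 ▸ hf2)
    calc (∫ ω in S, g ω * f ω)
        ≤ (∫ ω in S, g ω ^ (2:ℝ)) ^ ((1:ℝ)/2) * (∫ ω in S, f ω ^ (2:ℝ)) ^ ((1:ℝ)/2) := this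
      _ = Real.sqrt (∫ ω in S, g ω ^ 2) * Real.sqrt (∫ ω in S, f ω ^ 2) := by
          rw [Real.sqrt_eq_rpow, Real.sqrt_eq_rpow]
          have egr : ∀ x : ℝ, x ^ (2:ℝ) = x ^ (2:ℕ) := fun x => by
            rw [show ((2:ℝ)) = ((2:ℕ):ℝ) by norm_num, Real.rpow_natCast]
          simp_rw [egr]
  have hN0 : 0 ≤ ∫ ω in S, nuclearNorm (F ω * K) :=
    integral_nonneg fun ω => nuclearNorm_nonneg _
  have hX0 : 0 ≤ ∫ ω in S, (((G ω * K)ᴴ * (G ω * K)).trace).re :=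
    integral_nonneg fun ω => re_trace_nonneg _
  have hY0 : 0 ≤ ∫ ω in S, (((F ω * L ω)ᴴ * (F ω * L ω)).trace).re :=
    integral_nonneg fun ω => re_trace_nonneg _
  have hgint : (∫ ω in S, g ω ^ 2) = ∫ ω in S, (((F ω * L ω)ᴴ * (F ω * L ω)).trace).re := by
    congr 1; exact funext hgsq
  have hfint : (∫ ω in S, f ω ^ 2) = ∫ ω in S, (((G ω * K)ᴴ * (G ω * K)).trace).re := by
    congr 1; exact funext hfsq
  have hc : 0 < 1 / (2 * π) := by positivity
  set N := ∫ ω in S, nuclearNorm (F ω * K)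
  set X := ∫ ω in S, (((G ω * K)ᴴ * (G ω * K)).trace).re
  set Y := ∫ ω in S, (((F ω * L ω)ᴴ * (F ω * L ω)).trace).re
  have hNle : N ≤ Real.sqrt Y * Real.sqrt X := by
    refine hN.trans (hH.trans ?_)
    rw [hgint, hfint]
  have hN2 : N ^ 2 ≤ Y * X := by
    calc N ^ 2 ≤ (Real.sqrt Y * Real.sqrt X) ^ 2 := by
          exact pow_le_pow_left₀ hN0 hNle 2
      _ = Y * X := by
          rw [mul_pow, Real.sq_sqrt hY0, Real.sq_sqrt hX0]
  calc (1 / (2 * π) * N) ^ 2 = (1 / (2 * π)) ^ 2 * N ^ 2 := by ring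
    _ ≤ (1 / (2 * π)) ^ 2 * (Y * X) := by
        exact mul_le_mul_of_nonneg_left hN2 (by positivity)
    _ = 1 / (2 * π) * X * (1 / (2 * π) * Y) := by ring
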